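/- Let (X, μ) be a measure space with 0 < μ(X) < ∞, let p > 1 be a real number, let C > 0, let u : X → ℝ be measurable, let k₀ ∈ ℤ, and let (m_k)_{k ∈ ℤ} be nonnegative real numbers. Suppose that μ({x : |u(x)| > 2^k}) ≤ C · 2^{−pk} m_k^p for all integers k > k₀, and μ({x : |u(x)| > 2^k}) ≤ C · 2^{−pk} m_k^p + μ(X) for all integers k ≤ k₀. Then there exists a constant A > 0, depending only on p, such that (∫_X |u|^p dμ)^{1/p} ≤ A C^{1/p} · Σ_{k ∈ ℤ} m_k + A · μ(X)^{1/p} · 2^{k₀}. -/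

import Mathlib

open MeasureTheory ENNReal

lemma tsum_rpow_le_rpow {ι : Type*} [Countable ι] {p : ℝ} (hp : 1 ≤ p)
    (a : ι → ℝ≥0∞) (ha : ∀ i, a i ≠ ⊤) : (∑' i, a i ^ p) ≤ (∑' i, a i) ^ p := by
  have hp0 : (0:ℝ) < p := lt_of_lt_of_le one_pos hp
  set S := ∑' i, a i with hS
  rcases eq_or_ne S ⊤ with h | h
  · rw [h, ENNReal.top_rpow_of_pos hp0]; exact le_top
  have hkey : ∀ i, a i ^ p ≤ a i * S ^ (p - 1) := by
    intro i
    rcases eq_or_ne (a i) 0 with h0 | h0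
    · rw [h0, ENNReal.zero_rpow_of_pos hp0, zero_mul]
    · calc a i ^ p = a i ^ (1 + (p - 1)) := by ring_nf
        _ = a i ^ (1:ℝ) * a i ^ (p - 1) := ENNReal.rpow_add _ _ h0 (ha i)
        _ ≤ a i * S ^ (p - 1) := by
            rw [ENNReal.rpow_one]
            exact mul_le_mul_right (ENNReal.rpow_le_rpow (ENNReal.le_tsum i)
              (by linarith)) _
  calc (∑' i, a i ^ p) ≤ ∑' i, a i * S ^ (p - 1) := ENNReal.tsum_le_tsum hkey
    _ = S * S ^ (p - 1) := by rw [ENNReal.tsum_mul_right]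
    _ = S ^ p := by
        rcases eq_or_ne S 0 with h0 | h0
        · rw [h0, zero_mul, ENNReal.zero_rpow_of_pos hp0]
        · nth_rewrite 1 [← ENNReal.rpow_one S]
          rw [← ENNReal.rpow_add _ _ h0 h]
          congr 1; ring

lemma dyadic_level (k₀ : ℤ) {t : ℝ} (ht : (2:ℝ) ^ (k₀ + 1) < t) :
    ∃ k : ℤ, k₀ + 1 ≤ k ∧ (2:ℝ) ^ k < t ∧ t ≤ (2:ℝ) ^ (k + 1) := by
  have ht0 : 0 < t := lt_trans (zpow_pos two_pos _) ht
  set j := Int.log 2 t with hj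
  have hj1 : (2:ℝ) ^ j ≤ t := by
    have := Int.zpow_log_le_self (b := 2) (r := t) (by norm_num) ht0
    exact_mod_cast this
  have hj2 : t < (2:ℝ) ^ (j + 1) := by
    have := Int.lt_zpow_succ_log_self (b := 2) (by norm_num) t
    exact_mod_cast this
  rcases lt_or_eq_of_le hj1 with h | h
  · refine ⟨j, ?_, h, hj2.le⟩
    have h2 : (2:ℝ) ^ (k₀ + 1) < (2:ℝ) ^ (j + 1) := lt_trans ht hj2
    have := (zpow_lt_zpow_iff_right₀ (one_lt_two (α := ℝ))).mp h2
    omega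
  · refine ⟨j - 1, ?_, ?_, ?_⟩
    · have h2 : (2:ℝ) ^ (k₀ + 1) < (2:ℝ) ^ j := by rw [h]; exact ht
      have := (zpow_lt_zpow_iff_right₀ (one_lt_two (α := ℝ))).mp h2
      omega
    · rw [← h]
      exact (zpow_lt_zpow_iff_right₀ (one_lt_two (α := ℝ))).mpr (by omega)
    · rw [sub_add_cancel, ← h]


/-- upgrading a dyadic family of weak-type bounds to a strong `L^p` bound.
If `μ({|u| > 2^k}) ≤ C 2^{−pk} m_k^p` for `k > k₀` and
`μ({|u| > 2^k}) ≤ C 2^{−pk} m_k^p + μ(X)` for `k ≤ k₀`, then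
`‖u‖_p ≤ A C^{1/p} Σ_k m_k + A μ(X)^{1/p} 2^{k₀}`, with `A` depending only on `p`. -/
theorem strong_Lp_of_dyadic_weak_bounds (p : ℝ) (hp : 1 < p) :
    ∃ A : ℝ, 0 < A ∧
      ∀ (X : Type*) [MeasurableSpace X] (μ : Measure X),
        0 < μ Set.univ → μ Set.univ < ⊤ →
        ∀ C : ℝ, 0 < C →
        ∀ u : X → ℝ, Measurable u →
        ∀ (k₀ : ℤ) (m : ℤ → ℝ), (∀ k, 0 ≤ m k) →
        (∀ k : ℤ, k₀ < k →
          μ {x | (2 : ℝ) ^ k < |u x|} ≤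
            ENNReal.ofReal (C * (2 : ℝ) ^ (-(p * (k : ℝ))) * m k ^ p)) →
        (∀ k : ℤ, k ≤ k₀ →
          μ {x | (2 : ℝ) ^ k < |u x|} ≤
            ENNReal.ofReal (C * (2 : ℝ) ^ (-(p * (k : ℝ))) * m k ^ p) + μ Set.univ) →
        (∫⁻ x, ENNReal.ofReal (|u x| ^ p) ∂μ) ^ (1 / p) ≤
          ENNReal.ofReal (A * C ^ (1 / p)) * (∑' k : ℤ, ENNReal.ofReal (m k)) +
            ENNReal.ofReal A * μ Set.univ ^ (1 / p) *
              ENNReal.ofReal ((2 : ℝ) ^ k₀) := by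
  have hp0 : (0:ℝ) < p := lt_trans one_pos hp
  refine ⟨2, two_pos, ?_⟩
  intro X _ μ hμ0 hμtop C hC u hu k₀ m hm h1 _h2
  set S : ℤ → Set X := fun k => {x | (2:ℝ) ^ k < |u x| ∧ |u x| ≤ (2:ℝ) ^ (k + 1)} with hSdef
  have hSmeas : ∀ k, MeasurableSet (S k) := fun k =>
    (measurableSet_lt measurable_const hu.abs).inter
      (measurableSet_le hu.abs measurable_const)
  set c : ℤ → ℝ≥0∞ := fun k => ENNReal.ofReal ((2:ℝ) ^ (k + 1)) ^ p with hcdef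
  -- pointwise bound
  have hpt : ∀ x, ENNReal.ofReal (|u x| ^ p) ≤
      ENNReal.ofReal ((2:ℝ) ^ (k₀ + 1)) ^ p +
        ∑' n : ℕ, (S (k₀ + 1 + n)).indicator (fun _ => c (k₀ + 1 + n)) x := by
    intro x
    by_cases hx : |u x| ≤ (2:ℝ) ^ (k₀ + 1)
    · refine le_trans ?_ le_self_add
      rw [ENNReal.ofReal_rpow_of_nonneg (by positivity) hp0.le]
      exact ENNReal.ofReal_le_ofReal
        (Real.rpow_le_rpow (abs_nonneg _) hx hp0.le)
    · push_neg at hx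
      obtain ⟨k, hk, hk1, hk2⟩ := dyadic_level k₀ hx
      refine le_trans ?_ le_add_self
      set n : ℕ := (k - (k₀ + 1)).toNat with hn
      have hkn : k₀ + 1 + (n : ℤ) = k := by omega
      calc ENNReal.ofReal (|u x| ^ p) ≤ c k := by
            rw [hcdef]
            dsimp only
            rw [ENNReal.ofReal_rpow_of_nonneg (by positivity) hp0.le]
            exact ENNReal.ofReal_le_ofReal
              (Real.rpow_le_rpow (abs_nonneg _) hk2 hp0.le)
        _ = (S (k₀ + 1 + n)).indicator (fun _ => c (k₀ + 1 + n)) x := by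
            rw [hkn]
            exact (Set.indicator_of_mem (show x ∈ S k from ⟨hk1, hk2⟩) (fun _ => c k)).symm
        _ ≤ _ := ENNReal.le_tsum n
  -- integrate
  have hI : (∫⁻ x, ENNReal.ofReal (|u x| ^ p) ∂μ) ≤
      ENNReal.ofReal ((2:ℝ) ^ (k₀ + 1)) ^ p * μ Set.univ +
        ∑' n : ℕ, c (k₀ + 1 + n) * μ (S (k₀ + 1 + n)) := by
    calc (∫⁻ x, ENNReal.ofReal (|u x| ^ p) ∂μ) ≤
        ∫⁻ x, (ENNReal.ofReal ((2:ℝ) ^ (k₀ + 1)) ^ p +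
          ∑' n : ℕ, (S (k₀ + 1 + n)).indicator (fun _ => c (k₀ + 1 + n)) x) ∂μ :=
          lintegral_mono hpt
      _ = ENNReal.ofReal ((2:ℝ) ^ (k₀ + 1)) ^ p * μ Set.univ +
          ∑' n : ℕ, c (k₀ + 1 + n) * μ (S (k₀ + 1 + n)) := by
          rw [lintegral_add_left measurable_const, lintegral_const]
          congr 1
          rw [lintegral_tsum (fun n =>
            (measurable_const.indicator (hSmeas _)).aemeasurable)]
          congr 1
          funext n
          rw [lintegral_indicator (hSmeas _), setLIntegral_const]
  -- bound the tail sum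
  have hμS : ∀ n : ℕ, c (k₀ + 1 + n) * μ (S (k₀ + 1 + n)) ≤
      ENNReal.ofReal C * (2:ℝ≥0∞) ^ p * ENNReal.ofReal (m (k₀ + 1 + n)) ^ p := by
    intro n
    set k : ℤ := k₀ + 1 + n with hkdef
    have hμSk : μ (S k) ≤ ENNReal.ofReal (C * (2 : ℝ) ^ (-(p * (k : ℝ))) * m k ^ p) := by
      refine le_trans (measure_mono ?_) (h1 k (by omega))
      intro x hxS
      exact hxS.1
    calc c k * μ (S k) ≤ c k * ENNReal.ofReal (C * (2 : ℝ) ^ (-(p * (k : ℝ))) * m k ^ p) :=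
          mul_le_mul_right hμSk _
      _ = ENNReal.ofReal C * (2:ℝ≥0∞) ^ p * ENNReal.ofReal (m k) ^ p := by
          rw [hcdef]
          dsimp only
          rw [ENNReal.ofReal_rpow_of_nonneg (by positivity) hp0.le,
            ← ENNReal.ofReal_mul (by positivity)]
          rw [ENNReal.ofReal_rpow_of_nonneg (hm k) hp0.le]
          rw [show (2:ℝ≥0∞) = ENNReal.ofReal 2 by simp]
          rw [ENNReal.ofReal_rpow_of_nonneg (by norm_num) hp0.le,
            ← ENNReal.ofReal_mul hC.le, ← ENNReal.ofReal_mul (by positivity)]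
          congr 1
          have h2k1 : ((2:ℝ) ^ (k + 1)) ^ p = (2:ℝ) ^ (((k:ℝ) + 1) * p) := by
            rw [← Real.rpow_intCast 2 (k + 1), ← Real.rpow_mul (by norm_num)]
            push_cast
            ring_nf
          rw [h2k1]
          rw [show ((2:ℝ) ^ (((k:ℝ) + 1) * p)) * (C * (2:ℝ) ^ (-(p * (k:ℝ))) * m k ^ p)
              = C * ((2:ℝ) ^ (((k:ℝ) + 1) * p) * (2:ℝ) ^ (-(p * (k:ℝ)))) * m k ^ p by ring]
          rw [← Real.rpow_add two_pos, show ((k:ℝ) + 1) * p + -(p * (k:ℝ)) = p by ring]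
  set a : ℤ → ℝ≥0∞ := fun k => ENNReal.ofReal (m k) with hadef
  set T : ℝ≥0∞ := ∑' k : ℤ, a k ^ p with hTdef
  have hinj : Function.Injective (fun n : ℕ => k₀ + 1 + (n : ℤ)) := by
    intro n1 n2 h
    simp only at h
    omega
  have htail : (∑' n : ℕ, c (k₀ + 1 + n) * μ (S (k₀ + 1 + n))) ≤
      ENNReal.ofReal C * (2:ℝ≥0∞) ^ p * T := by
    calc (∑' n : ℕ, c (k₀ + 1 + n) * μ (S (k₀ + 1 + n))) ≤
        ∑' n : ℕ, ENNReal.ofReal C * (2:ℝ≥0∞) ^ p * a (k₀ + 1 + n) ^ p :=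
          ENNReal.tsum_le_tsum hμS
      _ = ENNReal.ofReal C * (2:ℝ≥0∞) ^ p * ∑' n : ℕ, a (k₀ + 1 + n) ^ p := by
          rw [ENNReal.tsum_mul_left]
      _ ≤ ENNReal.ofReal C * (2:ℝ≥0∞) ^ p * T :=
          mul_le_mul_right (tsum_comp_le_tsum_of_injective hinj (fun k => a k ^ p)) _
  have hfin : (∫⁻ x, ENNReal.ofReal (|u x| ^ p) ∂μ) ≤
      ENNReal.ofReal ((2:ℝ) ^ (k₀ + 1)) ^ p * μ Set.univ +
        ENNReal.ofReal C * (2:ℝ≥0∞) ^ p * T :=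
    hI.trans (add_le_add_right htail _)
  have h1p : (0:ℝ) < 1 / p := by positivity
  have hpiece1 : (ENNReal.ofReal C * (2:ℝ≥0∞) ^ p * T) ^ (1/p) ≤
      ENNReal.ofReal (2 * C ^ (1/p)) * ∑' k : ℤ, a k := by
    rw [ENNReal.mul_rpow_of_nonneg _ _ h1p.le, ENNReal.mul_rpow_of_nonneg _ _ h1p.le,
      ← ENNReal.rpow_mul, mul_one_div_cancel hp0.ne', ENNReal.rpow_one,
      ENNReal.ofReal_rpow_of_nonneg hC.le h1p.le,
      ENNReal.ofReal_mul (by norm_num)]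
    have hT : T ^ (1/p) ≤ ∑' k : ℤ, a k := by
      rw [hTdef]
      have := tsum_rpow_le_rpow hp.le a (fun k => ENNReal.ofReal_ne_top)
      calc (∑' k : ℤ, a k ^ p) ^ (1/p) ≤ ((∑' k : ℤ, a k) ^ p) ^ (1/p) :=
            ENNReal.rpow_le_rpow this h1p.le
        _ = ∑' k : ℤ, a k := by
            rw [← ENNReal.rpow_mul, mul_one_div_cancel hp0.ne', ENNReal.rpow_one]
    calc ENNReal.ofReal (C ^ (1/p)) * 2 * T ^ (1/p) ≤
        ENNReal.ofReal (C ^ (1/p)) * 2 * ∑' k : ℤ, a k := mul_le_mul_right hT _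
      _ = ENNReal.ofReal 2 * ENNReal.ofReal (C ^ (1/p)) * ∑' k : ℤ, a k := by
          rw [show (ENNReal.ofReal 2) = (2:ℝ≥0∞) by simp]
          ring
  have hpiece2 : (ENNReal.ofReal ((2:ℝ) ^ (k₀ + 1)) ^ p * μ Set.univ) ^ (1/p) ≤
      ENNReal.ofReal (2:ℝ) * μ Set.univ ^ (1/p) * ENNReal.ofReal ((2:ℝ) ^ k₀) := by
    rw [ENNReal.mul_rpow_of_nonneg _ _ h1p.le, ← ENNReal.rpow_mul,
      mul_one_div_cancel hp0.ne', ENNReal.rpow_one,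
      show (2:ℝ) ^ (k₀ + 1) = 2 * 2 ^ k₀ by rw [zpow_add_one₀ two_ne_zero]; ring,
      ENNReal.ofReal_mul (by norm_num)]
    exact le_of_eq (by ring)
  calc (∫⁻ x, ENNReal.ofReal (|u x| ^ p) ∂μ) ^ (1/p) ≤
      (ENNReal.ofReal ((2:ℝ) ^ (k₀ + 1)) ^ p * μ Set.univ +
        ENNReal.ofReal C * (2:ℝ≥0∞) ^ p * T) ^ (1/p) :=
        ENNReal.rpow_le_rpow hfin h1p.le
    _ ≤ (ENNReal.ofReal ((2:ℝ) ^ (k₀ + 1)) ^ p * μ Set.univ) ^ (1/p) +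
        (ENNReal.ofReal C * (2:ℝ≥0∞) ^ p * T) ^ (1/p) :=
        ENNReal.rpow_add_le_add_rpow _ _ h1p.le (by rw [div_le_one hp0]; linarith)
    _ ≤ ENNReal.ofReal (2:ℝ) * μ Set.univ ^ (1/p) * ENNReal.ofReal ((2:ℝ) ^ k₀) +
        ENNReal.ofReal (2 * C ^ (1/p)) * ∑' k : ℤ, a k := add_le_add hpiece2 hpiece1
    _ = ENNReal.ofReal (2 * C ^ (1/p)) * (∑' k : ℤ, ENNReal.ofReal (m k)) +
        ENNReal.ofReal (2:ℝ) * μ Set.univ ^ (1/p) * ENNReal.ofReal ((2:ℝ) ^ k₀) := by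
        rw [add_comm]
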